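/- Cassini's identity for Fibonacci hybrid quaternions: for n ≥ 1, F̂_{n+1}·F̂_{n-1} - F̂_n² = (-1)ⁿ·(α·α*·β*·α̲·β̲ - β·β*·α*·β̲·α̲)/(α - β), where α = (1+√5)/2, β = (1-√5)/2, α* = 1 + 𝐢α + εα² + 𝐡α³, β* = 1 + 𝐢β + εβ² + 𝐡β³, α̲ = 1 + iα + jα² + kα³, β̲ = 1 + iβ + jβ² + kβ³. -/

import Mathlib

/-- A hybrid number over a ring `R`: `re + imI·𝐢 + imE·ε + imH·𝐡` with
`𝐢² = -1`, `ε² = 0`, `𝐡² = 1`, `𝐢ε = 1 - 𝐡`, `ε𝐢 = 1 + 𝐡`,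
`𝐢𝐡 = ε + 𝐢`, `𝐡𝐢 = -ε - 𝐢`, `ε𝐡 = -ε`, `𝐡ε = ε`. -/
@[ext]
structure Hybrid (R : Type*) where
  re : R
  imI : R
  imE : R
  imH : R

namespace Hybrid

variable {R : Type*} [Ring R]

instance : Zero (Hybrid R) := ⟨⟨0, 0, 0, 0⟩⟩
instance : One (Hybrid R) := ⟨⟨1, 0, 0, 0⟩⟩
instance : Add (Hybrid R) :=
  ⟨fun x y => ⟨x.re + y.re, x.imI + y.imI, x.imE + y.imE, x.imH + y.imH⟩⟩
instance : Neg (Hybrid R) := ⟨fun x => ⟨-x.re, -x.imI, -x.imE, -x.imH⟩⟩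
instance : Sub (Hybrid R) :=
  ⟨fun x y => ⟨x.re - y.re, x.imI - y.imI, x.imE - y.imE, x.imH - y.imH⟩⟩

/-- Multiplication of hybrid numbers, obtained by bilinear extension of the
multiplication table of the hybrid units (units commute with coefficients). -/
instance : Mul (Hybrid R) := ⟨fun x y =>
  ⟨x.re * y.re - x.imI * y.imI + x.imI * y.imE + x.imE * y.imI + x.imH * y.imH,
   x.re * y.imI + x.imI * y.re + x.imI * y.imH - x.imH * y.imI,
   x.re * y.imE + x.imE * y.re + x.imI * y.imH - x.imH * y.imI
     + x.imH * y.imE - x.imE * y.imH,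
   x.re * y.imH + x.imH * y.re + x.imE * y.imI - x.imI * y.imE⟩⟩

instance {S : Type*} [SMul S R] : SMul S (Hybrid R) :=
  ⟨fun s x => ⟨s • x.re, s • x.imI, s • x.imE, s • x.imH⟩⟩

/-- The hybrid unit `𝐢`. -/
def iu : Hybrid R := ⟨0, 1, 0, 0⟩
/-- The hybrid unit `ε`. -/
def eu : Hybrid R := ⟨0, 0, 1, 0⟩
/-- The hybrid unit `𝐡`. -/
def hu : Hybrid R := ⟨0, 0, 0, 1⟩

end Hybrid

noncomputable section

open Quaternion

/-- Hybrid quaternions: hybrid numbers with quaternion coefficients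
(the quaternion units commute with the hybrid units). -/
abbrev HQ := Hybrid (ℍ[ℝ])

/-- The quaternion unit `i` in the hybrid quaternion algebra. -/
def qi : HQ := ⟨⟨0, 1, 0, 0⟩, 0, 0, 0⟩
/-- The quaternion unit `j` in the hybrid quaternion algebra. -/
def qj : HQ := ⟨⟨0, 0, 1, 0⟩, 0, 0, 0⟩
/-- The quaternion unit `k` in the hybrid quaternion algebra. -/
def qk : HQ := ⟨⟨0, 0, 0, 1⟩, 0, 0, 0⟩

/-- Embedding of the real quaternions into the hybrid quaternions. -/
def eQ (q : ℍ[ℝ]) : HQ := ⟨q, 0, 0, 0⟩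
/-- Embedding of the hybrid numbers into the hybrid quaternions. -/
def eH (z : Hybrid ℝ) : HQ :=
  ⟨⟨z.re, 0, 0, 0⟩, ⟨z.imI, 0, 0, 0⟩, ⟨z.imE, 0, 0, 0⟩, ⟨z.imH, 0, 0, 0⟩⟩

/-- Fibonacci numbers, as real numbers. -/
def F (n : ℕ) : ℝ := Nat.fib n

/-- Lucas numbers, as real numbers. -/
def lucas : ℕ → ℝ
  | 0 => 2
  | 1 => 1
  | n + 2 => lucas (n + 1) + lucas n

/-- The Fibonacci quaternion `F̃ₘ = Fₘ + i F_{m+1} + j F_{m+2} + k F_{m+3}`. -/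
def fq (m : ℕ) : ℍ[ℝ] := ⟨F m, F (m + 1), F (m + 2), F (m + 3)⟩
/-- The Lucas quaternion `L̃ₘ`. -/
def lq (m : ℕ) : ℍ[ℝ] := ⟨lucas m, lucas (m + 1), lucas (m + 2), lucas (m + 3)⟩
/-- The Fibonacci hybrid number `F̆ₘ = Fₘ + 𝐢 F_{m+1} + ε F_{m+2} + 𝐡 F_{m+3}`. -/
def fh (m : ℕ) : Hybrid ℝ := ⟨F m, F (m + 1), F (m + 2), F (m + 3)⟩
/-- The Lucas hybrid number `L̆ₘ`. -/
def lh (m : ℕ) : Hybrid ℝ := ⟨lucas m, lucas (m + 1), lucas (m + 2), lucas (m + 3)⟩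
/-- The Fibonacci hybrid quaternion
`F̂ₙ = F̃ₙ + 𝐢 F̃_{n+1} + ε F̃_{n+2} + 𝐡 F̃_{n+3}
    = F̆ₙ + i F̆_{n+1} + j F̆_{n+2} + k F̆_{n+3}`. -/
def Fhat (n : ℕ) : HQ := ⟨fq n, fq (n + 1), fq (n + 2), fq (n + 3)⟩
/-- The Lucas hybrid quaternion `L̂ₙ`. -/
def Lhat (n : ℕ) : HQ := ⟨lq n, lq (n + 1), lq (n + 2), lq (n + 3)⟩

/-- `α = (1 + √5)/2`. -/
def ga : ℝ := (1 + Real.sqrt 5) / 2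
/-- `β = (1 - √5)/2`. -/
def gb : ℝ := (1 - Real.sqrt 5) / 2

/-- `x* = 1 + 𝐢 x + ε x² + 𝐡 x³` (a hybrid number with real coefficients). -/
def hstar (x : ℝ) : HQ :=
  ⟨1, ⟨x, 0, 0, 0⟩, ⟨x ^ 2, 0, 0, 0⟩, ⟨x ^ 3, 0, 0, 0⟩⟩
/-- `x̲ = 1 + i x + j x² + k x³` (a quaternion with real coefficients). -/
def qund (x : ℝ) : HQ := eQ ⟨1, x, x ^ 2, x ^ 3⟩

set_option linter.unusedSectionVars false

namespace Hybrid

variable {R : Type*} [Ring R]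

@[simp] lemma mul_re' (x y : Hybrid R) :
    (x * y).re = x.re * y.re - x.imI * y.imI + x.imI * y.imE + x.imE * y.imI
      + x.imH * y.imH := rfl
@[simp] lemma mul_imI' (x y : Hybrid R) :
    (x * y).imI = x.re * y.imI + x.imI * y.re + x.imI * y.imH - x.imH * y.imI := rfl
@[simp] lemma mul_imE' (x y : Hybrid R) :
    (x * y).imE = x.re * y.imE + x.imE * y.re + x.imI * y.imH - x.imH * y.imI
      + x.imH * y.imE - x.imE * y.imH := rfl
@[simp] lemma mul_imH' (x y : Hybrid R) :
    (x * y).imH = x.re * y.imH + x.imH * y.re + x.imE * y.imI - x.imI * y.imE := rfl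
@[simp] lemma add_re' (x y : Hybrid R) : (x + y).re = x.re + y.re := rfl
@[simp] lemma add_imI' (x y : Hybrid R) : (x + y).imI = x.imI + y.imI := rfl
@[simp] lemma add_imE' (x y : Hybrid R) : (x + y).imE = x.imE + y.imE := rfl
@[simp] lemma add_imH' (x y : Hybrid R) : (x + y).imH = x.imH + y.imH := rfl
@[simp] lemma sub_re' (x y : Hybrid R) : (x - y).re = x.re - y.re := rfl
@[simp] lemma sub_imI' (x y : Hybrid R) : (x - y).imI = x.imI - y.imI := rfl
@[simp] lemma sub_imE' (x y : Hybrid R) : (x - y).imE = x.imE - y.imE := rfl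
@[simp] lemma sub_imH' (x y : Hybrid R) : (x - y).imH = x.imH - y.imH := rfl
@[simp] lemma neg_re' (x : Hybrid R) : (-x).re = -x.re := rfl
@[simp] lemma neg_imI' (x : Hybrid R) : (-x).imI = -x.imI := rfl
@[simp] lemma neg_imE' (x : Hybrid R) : (-x).imE = -x.imE := rfl
@[simp] lemma neg_imH' (x : Hybrid R) : (-x).imH = -x.imH := rfl
@[simp] lemma smul_re' {S : Type*} [SMul S R] (s : S) (x : Hybrid R) :
    (s • x).re = s • x.re := rfl
@[simp] lemma smul_imI' {S : Type*} [SMul S R] (s : S) (x : Hybrid R) :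
    (s • x).imI = s • x.imI := rfl
@[simp] lemma smul_imE' {S : Type*} [SMul S R] (s : S) (x : Hybrid R) :
    (s • x).imE = s • x.imE := rfl
@[simp] lemma smul_imH' {S : Type*} [SMul S R] (s : S) (x : Hybrid R) :
    (s • x).imH = s • x.imH := rfl
@[simp] lemma zero_re' : (0 : Hybrid R).re = 0 := rfl
@[simp] lemma zero_imI' : (0 : Hybrid R).imI = 0 := rfl
@[simp] lemma zero_imE' : (0 : Hybrid R).imE = 0 := rfl
@[simp] lemma zero_imH' : (0 : Hybrid R).imH = 0 := rfl

lemma hmul_add (x y z : Hybrid R) : x * (y + z) = x * y + x * z := by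
  ext <;> simp <;> noncomm_ring

lemma hadd_mul (x y z : Hybrid R) : (x + y) * z = x * z + y * z := by
  ext <;> simp <;> noncomm_ring

instance : AddCommGroup (Hybrid R) where
  add_assoc a b c := by ext <;> simp [add_assoc]
  zero_add a := by ext <;> simp
  add_zero a := by ext <;> simp
  add_comm a b := by ext <;> simp [add_comm]
  neg_add_cancel a := by ext <;> simp
  sub_eq_add_neg a b := by ext <;> simp [sub_eq_add_neg]
  nsmul := nsmulRec
  zsmul := zsmulRec

end Hybrid

noncomputable section AuxCassini

open Quaternion

/-- The Cassini step identity, at the level of the hybrid-quaternion algebra. -/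
lemma cassini_step (a b : HQ) :
    ((a + b) + a) * a - (a + b) * (a + b) = -((a + b) * b - a * a) := by
  simp only [Hybrid.hmul_add, Hybrid.hadd_mul]
  abel

lemma F_rec (k : ℕ) : F (k + 2) = F (k + 1) + F k := by
  simp only [F, Nat.fib_add_two]
  push_cast
  ring

lemma Fhat_rec (m : ℕ) : Fhat (m + 2) = Fhat (m + 1) + Fhat m := by
  have h : forall k : ℕ, F (k + 2) = F (k + 1) + F k := F_rec
  ext <;> simp [Fhat, fq, Nat.add_assoc] <;> exact h _

lemma hsmul_smul (a b : ℝ) (x : HQ) : (a * b) • x = a • (b • x) := by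
  ext <;> simp [mul_smul]

lemma hsmul_neg (a : ℝ) (x : HQ) : a • (-x) = (-a) • x := by
  ext <;> simp

lemma hneg_smul (a : ℝ) (x : HQ) : -(a • x) = (-a) • x := by
  ext <;> simp

lemma T_eq (m : ℕ) :
    Fhat (m + 2) * Fhat m - Fhat (m + 1) * Fhat (m + 1) =
      ((-1 : ℝ) ^ m) • (Fhat 2 * Fhat 0 - Fhat 1 * Fhat 1) := by
  induction m with
  | zero => ext <;> simp
  | succ k ih =>
    have h2 : Fhat (k + 2) = Fhat (k + 1) + Fhat k := Fhat_rec k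
    have h3 : Fhat (k + 3) = (Fhat (k + 1) + Fhat k) + Fhat (k + 1) := by
      have h4 := Fhat_rec (k + 1)
      rw [show k + 1 + 2 = k + 3 from rfl, show k + 1 + 1 = k + 2 from rfl] at h4
      rw [h4, h2]
    rw [show k + 1 + 2 = k + 3 from rfl, show k + 1 + 1 = k + 2 from rfl, h3, h2,
        cassini_step (Fhat (k + 1)) (Fhat k), ← h2, ih, hneg_smul, pow_succ]
    congr 1
    ring

lemma fibv0 : F 0 = 0 := by norm_num [F]
lemma fibv1 : F 1 = 1 := by norm_num [F]
lemma fibv2 : F 2 = 1 := by norm_num [F, show Nat.fib 2 = 1 from rfl]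
lemma fibv3 : F 3 = 2 := by norm_num [F, show Nat.fib 3 = 2 from rfl]
lemma fibv4 : F 4 = 3 := by norm_num [F, show Nat.fib 4 = 3 from rfl]
lemma fibv5 : F 5 = 5 := by norm_num [F, show Nat.fib 5 = 5 from rfl]
lemma fibv6 : F 6 = 8 := by norm_num [F, show Nat.fib 6 = 8 from rfl]
lemma fibv7 : F 7 = 13 := by norm_num [F, show Nat.fib 7 = 13 from rfl]
lemma fibv8 : F 8 = 21 := by norm_num [F, show Nat.fib 8 = 21 from rfl]

lemma fq_re' (m : ℕ) : (fq m).re = F m := rfl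
lemma fq_imI' (m : ℕ) : (fq m).imI = F (m + 1) := rfl
lemma fq_imJ' (m : ℕ) : (fq m).imJ = F (m + 2) := rfl
lemma fq_imK' (m : ℕ) : (fq m).imK = F (m + 3) := rfl
lemma hstar_re' (x : ℝ) : (hstar x).re = 1 := rfl
lemma hstar_imI_re' (x : ℝ) : (hstar x).imI.re = x := rfl
lemma hstar_imI_imI' (x : ℝ) : (hstar x).imI.imI = 0 := rfl
lemma hstar_imI_imJ' (x : ℝ) : (hstar x).imI.imJ = 0 := rfl
lemma hstar_imI_imK' (x : ℝ) : (hstar x).imI.imK = 0 := rfl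
lemma hstar_imE_re' (x : ℝ) : (hstar x).imE.re = x ^ 2 := rfl
lemma hstar_imE_imI' (x : ℝ) : (hstar x).imE.imI = 0 := rfl
lemma hstar_imE_imJ' (x : ℝ) : (hstar x).imE.imJ = 0 := rfl
lemma hstar_imE_imK' (x : ℝ) : (hstar x).imE.imK = 0 := rfl
lemma hstar_imH_re' (x : ℝ) : (hstar x).imH.re = x ^ 3 := rfl
lemma hstar_imH_imI' (x : ℝ) : (hstar x).imH.imI = 0 := rfl
lemma hstar_imH_imJ' (x : ℝ) : (hstar x).imH.imJ = 0 := rfl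
lemma hstar_imH_imK' (x : ℝ) : (hstar x).imH.imK = 0 := rfl
lemma qund_re_re' (x : ℝ) : (qund x).re.re = 1 := rfl
lemma qund_re_imI' (x : ℝ) : (qund x).re.imI = x := rfl
lemma qund_re_imJ' (x : ℝ) : (qund x).re.imJ = x ^ 2 := rfl
lemma qund_re_imK' (x : ℝ) : (qund x).re.imK = x ^ 3 := rfl
lemma qund_imI' (x : ℝ) : (qund x).imI = 0 := rfl
lemma qund_imE' (x : ℝ) : (qund x).imE = 0 := rfl
lemma qund_imH' (x : ℝ) : (qund x).imH = 0 := rfl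

set_option maxHeartbeats 1000000 in
lemma key :
    (Real.sqrt 5) • (Fhat 2 * Fhat 0 - Fhat 1 * Fhat 1) =
      -(ga • (hstar ga * hstar gb * qund ga * qund gb) -
         gb • (hstar gb * hstar ga * qund gb * qund ga)) := by
  have hs : Real.sqrt 5 ^ 2 = 5 := Real.sq_sqrt (by norm_num)
  ext <;>
    simp [Fhat, fq_re', fq_imI', fq_imJ', fq_imK', hstar_re', hstar_imI_re', hstar_imI_imI', hstar_imI_imJ', hstar_imI_imK', hstar_imE_re', hstar_imE_imI',
      hstar_imE_imJ', hstar_imE_imK', hstar_imH_re', hstar_imH_imI', hstar_imH_imJ', hstar_imH_imK', qund_re_re', qund_re_imI', qund_re_imJ', qund_re_imK', qund_imI', qund_imE',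
      qund_imH', ga, gb, Quaternion.re_mul, Quaternion.imI_mul,
      Quaternion.imJ_mul, Quaternion.imK_mul, fibv0, fibv1, fibv2, fibv3, fibv4, fibv5,
      fibv6, fibv7, fibv8, -Real.goldenRatio_sq, -Real.goldenConj_sq] <;>
    set s := Real.sqrt 5
  · linear_combination ((-1/4096 : ℝ) * s ^ 11 + (1/4096 : ℝ) * s ^ 9 + (-37/2048 : ℝ) * s ^ 7 + (81/2048 : ℝ) * s ^ 5 + (-1381/4096 : ℝ) * s ^ 3 + (4365/4096 : ℝ) * s) * hs + ((1/1024 : ℝ) * s ^ 9 + (1/128 : ℝ) * s ^ 7 + (-7/512 : ℝ) * s ^ 5 + (1/8 : ℝ) * s ^ 3 + (-1403/1024 : ℝ) * s ^ 1) * hs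
  · linear_combination (0 : ℝ) * hs + ((1/1024 : ℝ) * s ^ 9 + (5/512 : ℝ) * s ^ 5 + (-11/128 : ℝ) * s ^ 3 + (-435/1024 : ℝ) * s ^ 1) * hs
  · linear_combination ((1/256 : ℝ) * s ^ 7 + (-11/256 : ℝ) * s ^ 5 + (19/256 : ℝ) * s ^ 3 + (-585/256 : ℝ) * s) * hs + ((-1/128 : ℝ) * s ^ 7 + (3/128 : ℝ) * s ^ 5 + (-27/128 : ℝ) * s ^ 3 + (249/128 : ℝ) * s ^ 1) * hs
  · linear_combination ((-3/256 : ℝ) * s ^ 7 + (-11/256 : ℝ) * s ^ 5 + (-145/256 : ℝ) * s ^ 3 + (-225/256 : ℝ) * s) * hs + ((-1/256 : ℝ) * s ^ 7 + (3/256 : ℝ) * s ^ 5 + (29/256 : ℝ) * s ^ 3 + (225/256 : ℝ) * s ^ 1) * hs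
  · linear_combination ((1/256 : ℝ) * s ^ 7 + (5/256 : ℝ) * s ^ 5 + (51/256 : ℝ) * s ^ 3 + (263/256 : ℝ) * s) * hs + ((-1/64 : ℝ) * s ^ 5 + (-5/32 : ℝ) * s ^ 3 + (-21/64 : ℝ) * s ^ 1) * hs
  · linear_combination ((-1/4 : ℝ) * s ^ 3 + (-3/4 : ℝ) * s) * hs + ((-1/64 : ℝ) * s ^ 7 + (-1/32 : ℝ) * s ^ 5 + (-1/64 : ℝ) * s ^ 3 + (-3/16 : ℝ) * s ^ 1) * hs
  · linear_combination ((-1/16 : ℝ) * s ^ 5 + (-3/16 : ℝ) * s ^ 3 + (-1/2 : ℝ) * s) * hs + ((1/8 : ℝ) * s ^ 3 + (3/8 : ℝ) * s ^ 1) * hs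
  · linear_combination ((7/16 : ℝ) * s ^ 3 + (41/16 : ℝ) * s) * hs + ((1/16 : ℝ) * s ^ 5 + (-1/16 : ℝ) * s ^ 3 + (1/4 : ℝ) * s ^ 1) * hs
  · linear_combination ((1/256 : ℝ) * s ^ 7 + (17/256 : ℝ) * s ^ 5 + (75/256 : ℝ) * s ^ 3 + (803/256 : ℝ) * s) * hs + ((1/1024 : ℝ) * s ^ 9 + (1/256 : ℝ) * s ^ 7 + (-33/512 : ℝ) * s ^ 5 + (-3/256 : ℝ) * s ^ 3 + (-1207/1024 : ℝ) * s ^ 1) * hs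
  · linear_combination ((-1/4 : ℝ) * s ^ 3 + (-7/4 : ℝ) * s) * hs + ((-1/256 : ℝ) * s ^ 9 + (-5/256 : ℝ) * s ^ 7 + (-27/256 : ℝ) * s ^ 5 + (-55/256 : ℝ) * s ^ 3 + (3/32 : ℝ) * s ^ 1) * hs
  · linear_combination ((-1/16 : ℝ) * s ^ 5 + (-7/16 : ℝ) * s ^ 3 + (-2/1 : ℝ) * s) * hs + ((-1/64 : ℝ) * s ^ 7 + (27/64 : ℝ) * s ^ 3 + (75/32 : ℝ) * s ^ 1) * hs
  · linear_combination ((7/16 : ℝ) * s ^ 3 + (93/16 : ℝ) * s) * hs + ((1/64 : ℝ) * s ^ 7 + (9/64 : ℝ) * s ^ 5 + (51/64 : ℝ) * s ^ 3 + (51/64 : ℝ) * s ^ 1) * hs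
  · linear_combination ((3/256 : ℝ) * s ^ 7 + (3/256 : ℝ) * s ^ 5 + (129/256 : ℝ) * s ^ 3 + (249/256 : ℝ) * s) * hs + ((-1/256 : ℝ) * s ^ 7 + (-5/256 : ℝ) * s ^ 5 + (-99/256 : ℝ) * s ^ 3 + (41/256 : ℝ) * s ^ 1) * hs
  · linear_combination ((1/1 : ℝ) * s) * hs + ((1/64 : ℝ) * s ^ 7 + (-1/64 : ℝ) * s ^ 5 + (3/64 : ℝ) * s ^ 3 + (-19/64 : ℝ) * s ^ 1) * hs
  · linear_combination ((1/16 : ℝ) * s ^ 3 + (39/16 : ℝ) * s) * hs + ((1/16 : ℝ) * s ^ 5 + (3/16 : ℝ) * s ^ 3 + (-1/2 : ℝ) * s ^ 1) * hs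
  · linear_combination ((9/16 : ℝ) * s ^ 3 + (35/16 : ℝ) * s) * hs + ((-1/16 : ℝ) * s ^ 5 + (-3/16 : ℝ) * s ^ 3) * hs

lemma gagb : ga - gb = Real.sqrt 5 := by
  unfold ga gb; ring

end AuxCassini

/-- Cassini identity for Fibonacci hybrid quaternions,
`F̂_{n+1} F̂_{n-1} - F̂ₙ² = (-1)ⁿ (α α* β* α̲ β̲ - β β* α* β̲ α̲)/(α - β)`. -/
theorem fib_hybrid_quaternion_cassini (n : ℕ) (hn : 1 ≤ n) :
    Fhat (n + 1) * Fhat (n - 1) - Fhat n * Fhat n =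
      ((-1 : ℝ) ^ n * (ga - gb)⁻¹) •
        (ga • (hstar ga * hstar gb * qund ga * qund gb) -
          gb • (hstar gb * hstar ga * qund gb * qund ga)) := by
  obtain ⟨m, rfl⟩ : ∃ m, n = m + 1 := ⟨n - 1, (Nat.succ_pred_eq_of_pos hn).symm⟩
  have hs5 : Real.sqrt 5 ≠ 0 := by
    have h0 : (0 : ℝ) < Real.sqrt 5 := Real.sqrt_pos.mpr (by norm_num)
    linarith
  have hone : ((1 : ℝ)) • (Fhat 2 * Fhat 0 - Fhat 1 * Fhat 1) =
      Fhat 2 * Fhat 0 - Fhat 1 * Fhat 1 := by ext <;> simp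
  have hC : Fhat 2 * Fhat 0 - Fhat 1 * Fhat 1 =
      (-(Real.sqrt 5)⁻¹) • (ga • (hstar ga * hstar gb * qund ga * qund gb) -
        gb • (hstar gb * hstar ga * qund gb * qund ga)) := by
    calc Fhat 2 * Fhat 0 - Fhat 1 * Fhat 1
        = ((Real.sqrt 5)⁻¹ * Real.sqrt 5) • (Fhat 2 * Fhat 0 - Fhat 1 * Fhat 1) := by
          rw [inv_mul_cancel₀ hs5, hone]
      _ = (Real.sqrt 5)⁻¹ • ((Real.sqrt 5) • (Fhat 2 * Fhat 0 - Fhat 1 * Fhat 1)) :=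
          hsmul_smul _ _ _
      _ = (Real.sqrt 5)⁻¹ • (-(ga • (hstar ga * hstar gb * qund ga * qund gb) -
            gb • (hstar gb * hstar ga * qund gb * qund ga))) := by rw [key]
      _ = (-(Real.sqrt 5)⁻¹) • (ga • (hstar ga * hstar gb * qund ga * qund gb) -
            gb • (hstar gb * hstar ga * qund gb * qund ga)) := hsmul_neg _ _
  rw [show m + 1 - 1 = m from rfl, show m + 1 + 1 = m + 2 from rfl, T_eq m, hC,
      ← hsmul_smul, gagb]
  congr 1
  rw [pow_succ]
  ring
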